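/- Every contractive unital algebra homomorphism from a unital C*-algebra into B(H) is a *-homomorphism. -/

import Mathlib

open ContinuousLinearMap Complex

/-- An invertible contraction with contractive inverse is unitary. -/
lemma aux_unitary_of_inv {H : Type*} [NormedAddCommGroup H] [InnerProductSpace ℂ H]
    [CompleteSpace H] {T S : H →L[ℂ] H} (h1 : S * T = 1) (h2 : T * S = 1)
    (hT : ‖T‖ ≤ 1) (hS : ‖S‖ ≤ 1) : T ∈ unitary (H →L[ℂ] H) := by
  have hiso : ∀ x : H, ‖T x‖ = ‖x‖ := by
    intro x
    refine le_antisymm ((T.le_opNorm x).trans (by nlinarith [norm_nonneg x])) ?_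
    calc ‖x‖ = ‖S (T x)‖ := by
          rw [← comp_apply, ← mul_def, h1, ContinuousLinearMap.one_apply]
      _ ≤ ‖S‖ * ‖T x‖ := S.le_opNorm _
      _ ≤ ‖T x‖ := by nlinarith [norm_nonneg (T x)]
  have hadj : star T * T = 1 := by
    rw [star_eq_adjoint, mul_def]
    exact (norm_map_iff_adjoint_comp_self T).mp hiso
  have hstar : star T = S := by
    calc star T = star T * (T * S) := by rw [h2, mul_one]
      _ = (star T * T) * S := by rw [mul_assoc]
      _ = S := by rw [hadj, one_mul]
  exact Unitary.mem_iff.mpr ⟨hadj, by rw [hstar, h2]⟩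

section

variable {A : Type*} [NormedRing A] [StarRing A] [CStarRing A] [NormedAlgebra ℂ A]
    [CompleteSpace A] [StarModule ℂ A]
    {H : Type*} [NormedAddCommGroup H] [InnerProductSpace ℂ H] [CompleteSpace H]

lemma aux_pi_unitary [Nontrivial A] (π : A →ₐ[ℂ] (H →L[ℂ] H)) (hπ : ∀ a, ‖π a‖ ≤ ‖a‖)
    {u : A} (hu : u ∈ unitary A) :
    π u ∈ unitary (H →L[ℂ] H) ∧ π (star u) = star (π u) := by
  have h1 : π (star u) * π u = 1 := by
    rw [← map_mul, Unitary.star_mul_self_of_mem hu, map_one]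
  have h2 : π u * π (star u) = 1 := by
    rw [← map_mul, Unitary.mul_star_self_of_mem hu, map_one]
  have hmem : π u ∈ unitary (H →L[ℂ] H) := by
    refine aux_unitary_of_inv h1 h2 ((hπ u).trans ?_) ((hπ (star u)).trans ?_)
    · exact (CStarRing.norm_of_mem_unitary hu).le
    · exact (CStarRing.norm_of_mem_unitary (Unitary.star_mem hu)).le
  refine ⟨hmem, ?_⟩
  calc π (star u) = π (star u) * (π u * star (π u)) := by
        rw [Unitary.mul_star_self_of_mem hmem, mul_one]
    _ = (π (star u) * π u) * star (π u) := by rw [mul_assoc]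
    _ = star (π u) := by rw [h1, one_mul]

lemma aux_sa_small [Nontrivial A] (π : A →ₐ[ℂ] (H →L[ℂ] H)) (hπ : ∀ a, ‖π a‖ ≤ ‖a‖)
    {b : A} (hb : IsSelfAdjoint b) (hb1 : ‖b‖ ≤ 1) : IsSelfAdjoint (π b) := by
  letI : CStarAlgebra A := { }
  have hbn : IsStarNormal b := hb.isStarNormal
  set f : ℂ → ℂ := fun z => z + Real.sqrt (1 - z.re ^ 2) * Complex.I with hf
  have hcont : Continuous f := by
    apply Continuous.add continuous_id
    exact ((Complex.continuous_ofReal.comp ((continuous_const.sub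
      ((Complex.continuous_re.pow 2))).sqrt)).mul continuous_const)
  have hu : cfc f b ∈ unitary A := by
    rw [cfc_unitary_iff f b hbn hcont.continuousOn]
    intro x hx
    have hxre := hb.mem_spectrum_eq_re hx
    have hx1 : ‖x‖ ≤ 1 := (spectrum.norm_le_norm_of_mem hx).trans hb1
    have hr : x.re ^ 2 ≤ 1 := by
      have : |x.re| ≤ ‖x‖ := Complex.abs_re_le_norm x
      nlinarith [abs_nonneg x.re, _root_.sq_abs x.re]
    have hs : Real.sqrt (1 - x.re ^ 2) ^ 2 = 1 - x.re ^ 2 := Real.sq_sqrt (by linarith)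
    have him : x.im = 0 := by rw [hxre]; simp
    simp only [hf]
    rw [mul_comm, Complex.star_def, Complex.mul_conj]
    rw [Complex.ext_iff]
    constructor
    · simp [Complex.normSq_apply, him]
      nlinarith
    · simp [Complex.normSq_apply]
  set u := cfc f b with hudef
  have hsum : u + star u = (2 : ℂ) • b := by
    rw [hudef, ← cfc_star f b, ← cfc_add b f _ hcont.continuousOn hcont.continuousOn.star]
    rw [← cfc_const_mul_id (2 : ℂ) b hbn]
    apply cfc_congr
    intro x hx
    have hxre := hb.mem_spectrum_eq_re hx
    have him : x.im = 0 := by rw [hxre]; simp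
    simp only [hf, star_add, Complex.star_def, map_mul, Complex.conj_I, Complex.conj_ofReal]
    rw [Complex.conj_eq_iff_im.mpr him]
    ring
  have hb_eq : b = (2 : ℂ)⁻¹ • (u + star u) := by
    rw [hsum, smul_smul]; norm_num
  obtain ⟨hmem, hstar⟩ := aux_pi_unitary π hπ hu
  have : π b = (2 : ℂ)⁻¹ • (π u + star (π u)) := by
    rw [hb_eq, map_smul, map_add, hstar]
  rw [IsSelfAdjoint, this]
  simp only [star_smul, star_add, star_star]
  rw [show star ((2 : ℂ)⁻¹) = (2 : ℂ)⁻¹ by simp, add_comm]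

lemma aux_sa [Nontrivial A] (π : A →ₐ[ℂ] (H →L[ℂ] H)) (hπ : ∀ a, ‖π a‖ ≤ ‖a‖)
    {a : A} (ha : IsSelfAdjoint a) : IsSelfAdjoint (π a) := by
  rcases eq_or_ne a 0 with rfl | h0
  · simp [IsSelfAdjoint]
  · have hn : (0 : ℝ) < ‖a‖ := norm_pos_iff.mpr h0
    set b := ((‖a‖ : ℂ))⁻¹ • a with hbdef
    have hb : IsSelfAdjoint b := by
      rw [IsSelfAdjoint, hbdef, star_smul, ha.star_eq, RCLike.star_def, map_inv₀,
        Complex.conj_ofReal]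
    have hb1 : ‖b‖ ≤ 1 := by
      rw [hbdef, norm_smul]
      simp [Complex.norm_real, abs_of_pos hn, inv_mul_cancel₀ hn.ne']
    have hab : a = (‖a‖ : ℂ) • b := by
      rw [hbdef, smul_smul, mul_inv_cancel₀ (by exact_mod_cast hn.ne'), one_smul]
    have := aux_sa_small π hπ hb hb1
    rw [IsSelfAdjoint, hab, map_smul, star_smul, this.star_eq, RCLike.star_def,
      Complex.conj_ofReal]

end

/-- Every contractive unital algebra homomorphism from a unital C*-algebra into `B(H)`
is a `*`-homomorphism. -/
theorem stmt9 {A : Type*} [NormedRing A] [StarRing A] [CStarRing A] [NormedAlgebra ℂ A]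
    [CompleteSpace A] [StarModule ℂ A]
    {H : Type*} [NormedAddCommGroup H] [InnerProductSpace ℂ H] [CompleteSpace H]
    (π : A →ₐ[ℂ] (H →L[ℂ] H)) (hπ : ∀ a, ‖π a‖ ≤ ‖a‖) :
    ∀ a : A, π (star a) = ContinuousLinearMap.adjoint (π a) := by
  intro a
  rcases subsingleton_or_nontrivial A with hA | hA
  · have h1 : star a = a := by rw [Subsingleton.elim (star a) a]
    have h2 : a = 1 := Subsingleton.elim a 1
    rw [h1, h2, map_one, ← ContinuousLinearMap.star_eq_adjoint, star_one]
  · obtain ⟨s, hs⟩ : ∃ s : A, s = (2 : ℂ)⁻¹ • (a + star a) := ⟨_, rfl⟩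
    obtain ⟨t, ht⟩ : ∃ t : A, t = (2 : ℂ)⁻¹ • (Complex.I • (star a - a)) := ⟨_, rfl⟩
    have hss : IsSelfAdjoint s := by
      rw [IsSelfAdjoint, hs, star_smul, star_add, star_star,
        show star ((2 : ℂ)⁻¹) = (2 : ℂ)⁻¹ by simp, add_comm]
    have hts : IsSelfAdjoint t := by
      rw [IsSelfAdjoint, ht, star_smul, star_smul, star_sub, star_star,
        show star ((2 : ℂ)⁻¹) = (2 : ℂ)⁻¹ by simp, Complex.star_def, Complex.conj_I,
        neg_smul, ← smul_neg, neg_sub]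
    have hat : a = s + Complex.I • t := by
      rw [hs, ht, smul_comm ((2 : ℂ)⁻¹) Complex.I, smul_smul Complex.I, Complex.I_mul_I,
        neg_one_smul, ← smul_neg, neg_sub, ← smul_add]
      rw [show a + star a + (a - star a) = (2 : ℂ) • a by rw [two_smul]; abel, smul_smul]
      norm_num
    have hsta : star a = s - Complex.I • t := by
      rw [hat, star_add, hss.star_eq, star_smul, hts.star_eq, Complex.star_def,
        Complex.conj_I, neg_smul, ← sub_eq_add_neg]
    have hπs := aux_sa π hπ hss
    have hπt := aux_sa π hπ hts
    rw [← ContinuousLinearMap.star_eq_adjoint, hsta, hat, map_sub, map_add, map_smul,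
      star_add, star_smul, hπs.star_eq, hπt.star_eq, Complex.star_def, Complex.conj_I,
      neg_smul, ← sub_eq_add_neg]
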